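/- For every natural number k, the composition of binary word morphisms φ_a ∘ φ_α^k ∘ φ_b equals φ_b ∘ φ_β^k ∘ φ_a. -/

import Mathlib

/-- Elementary Sturmian morphism φ_a: 0↦0, 1↦10 (false = 0, true = 1). -/
def phiA : Bool → List Bool
  | false => [false]
  | true => [true, false]

/-- φ_b: 0↦0, 1↦01. -/
def phiB : Bool → List Bool
  | false => [false]
  | true => [false, true]

/-- φ_α: 0↦01, 1↦1. -/
def phiAl : Bool → List Bool
  | false => [false, true]
  | true => [true]

/-- φ_β: 0↦10, 1↦1. -/
def phiBe : Bool → List Bool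
  | false => [true, false]
  | true => [true]

/-- Apply a morphism (given by its letter images) to a finite word. -/
def apm (f : Bool → List Bool) (w : List Bool) : List Bool := w.flatMap f

lemma apm_nil (f : Bool → List Bool) : apm f [] = [] := rfl

lemma apm_append (f : Bool → List Bool) (u v : List Bool) :
    apm f (u ++ v) = apm f u ++ apm f v := List.flatMap_append

lemma iter_nil (g : Bool → List Bool) (k : ℕ) : (apm g)^[k] [] = [] := by
  induction k with
  | zero => rfl
  | succ n ih => rw [Function.iterate_succ_apply, apm_nil, ih]

lemma iter_append (g : Bool → List Bool) (k : ℕ) (u v : List Bool) :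
    (apm g)^[k] (u ++ v) = (apm g)^[k] u ++ (apm g)^[k] v := by
  induction k generalizing u v with
  | zero => rfl
  | succ n ih => rw [Function.iterate_succ_apply, Function.iterate_succ_apply,
      Function.iterate_succ_apply, apm_append, ih]

lemma iterAl_true (k : ℕ) : (apm phiAl)^[k] [true] = [true] := by
  induction k with
  | zero => rfl
  | succ n ih => rw [Function.iterate_succ_apply]; exact ih

lemma iterBe_true (k : ℕ) : (apm phiBe)^[k] [true] = [true] := by
  induction k with
  | zero => rfl
  | succ n ih => rw [Function.iterate_succ_apply]; exact ih

lemma key (k : ℕ) :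
    apm phiA ((apm phiAl)^[k] [false]) = apm phiB ((apm phiBe)^[k] [false]) ∧
    apm phiA ((apm phiAl)^[k] [false]) ++ [true, false] =
      [false, true] ++ apm phiB ((apm phiBe)^[k] [false]) := by
  induction k with
  | zero => exact ⟨rfl, rfl⟩
  | succ n ih =>
    obtain ⟨h1, h2⟩ := ih
    have hA : (apm phiAl)^[n+1] [false] = (apm phiAl)^[n] [false] ++ [true] := by
      rw [Function.iterate_succ_apply]
      show (apm phiAl)^[n] ([false] ++ [true]) = _
      rw [iter_append, iterAl_true]
    have hB : (apm phiBe)^[n+1] [false] = [true] ++ (apm phiBe)^[n] [false] := by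
      rw [Function.iterate_succ_apply]
      show (apm phiBe)^[n] ([true] ++ [false]) = _
      rw [iter_append, iterBe_true]
    have hA' : apm phiA ((apm phiAl)^[n+1] [false]) =
        apm phiA ((apm phiAl)^[n] [false]) ++ [true, false] := by
      rw [hA, apm_append]; rfl
    have hB' : apm phiB ((apm phiBe)^[n+1] [false]) =
        [false, true] ++ apm phiB ((apm phiBe)^[n] [false]) := by
      rw [hB, apm_append]; rfl
    constructor
    · rw [hA', hB', h2]
    · rw [hA', hB', h2, ← h1, List.append_assoc, h2, ← h1]

theorem phi_a_alphak_b_eq_phi_b_betak_a (k : ℕ) (w : List Bool) :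
    apm phiA ((apm phiAl)^[k] (apm phiB w)) = apm phiB ((apm phiBe)^[k] (apm phiA w)) := by
  induction w with
  | nil => simp [apm_nil, iter_nil]
  | cons c w ih =>
    have hc : apm phiB (c :: w) = phiB c ++ apm phiB w := rfl
    have hc' : apm phiA (c :: w) = phiA c ++ apm phiA w := rfl
    rw [hc, hc', iter_append, iter_append, apm_append, apm_append, ih]
    congr 1
    cases c
    · exact (key k).1
    · -- phiB true = [false, true], phiA true = [true, false]
      have h1 : (apm phiAl)^[k] ([false] ++ [true]) =
          (apm phiAl)^[k] [false] ++ [true] := by rw [iter_append, iterAl_true]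
      have h2 : (apm phiBe)^[k] ([true] ++ [false]) =
          [true] ++ (apm phiBe)^[k] [false] := by rw [iter_append, iterBe_true]
      show apm phiA ((apm phiAl)^[k] ([false] ++ [true])) =
        apm phiB ((apm phiBe)^[k] ([true] ++ [false]))
      rw [h1, h2, apm_append, apm_append]
      have := (key k).2
      calc apm phiA ((apm phiAl)^[k] [false]) ++ apm phiA [true]
          = apm phiA ((apm phiAl)^[k] [false]) ++ [true, false] := rfl
        _ = [false, true] ++ apm phiB ((apm phiBe)^[k] [false]) := this
        _ = apm phiB [true] ++ apm phiB ((apm phiBe)^[k] [false]) := rfl
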